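/- Let d ≥ 2 be an integer and θ ∈ (0,1) with d·θ > 1. Then there exists h_c > 0 such that the map ψ_h(x) = h + d·arctanh(θ·tanh x) has: exactly one fixed point if |h| > h_c; exactly two fixed points if |h| = h_c; and exactly three fixed points if |h| < h_c. -/

import Mathlib

/-- The inverse hyperbolic tangent, `arctanh x = (1/2)·log((1+x)/(1-x))`. -/
noncomputable def arctanh (x : ℝ) : ℝ := (1 / 2) * Real.log ((1 + x) / (1 - x))

namespace CFT

open Real Set

lemma tanh_lt_one (x : ℝ) : Real.tanh x < 1 := by
  rw [Real.tanh_eq_sinh_div_cosh, div_lt_one (Real.cosh_pos x)]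
  nlinarith [Real.cosh_sub_sinh x, Real.exp_pos (-x)]

lemma neg_one_lt_tanh (x : ℝ) : -1 < Real.tanh x := by
  have := tanh_lt_one (-x); rw [Real.tanh_neg] at this; linarith

lemma abs_tanh_lt_one (x : ℝ) : |Real.tanh x| < 1 :=
  abs_lt.mpr ⟨neg_one_lt_tanh x, tanh_lt_one x⟩

lemma hasDerivAt_tanh (x : ℝ) : HasDerivAt Real.tanh (1 - Real.tanh x ^ 2) x := by
  have h : Real.tanh = fun y => Real.sinh y / Real.cosh y :=
    funext fun y => Real.tanh_eq_sinh_div_cosh y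
  have hc := Real.cosh_pos x
  have hd := (Real.hasDerivAt_sinh x).div (Real.hasDerivAt_cosh x) hc.ne'
  rw [h]
  refine hd.congr_deriv ?_
  have hs := Real.cosh_sq_sub_sinh_sq x
  field_simp

lemma tanh_strictMono : StrictMono Real.tanh := by
  apply strictMono_of_deriv_pos
  intro x
  rw [(hasDerivAt_tanh x).deriv]
  nlinarith [abs_tanh_lt_one x, abs_nonneg (Real.tanh x), sq_abs (Real.tanh x),
    abs_lt.mp (abs_tanh_lt_one x)]

lemma tanh_nonneg {x : ℝ} (hx : 0 ≤ x) : 0 ≤ Real.tanh x := by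
  rcases hx.eq_or_lt with h | h
  · simp [← h, Real.tanh_zero]
  · have := tanh_strictMono h; rw [Real.tanh_zero] at this; linarith

lemma continuous_tanh : Continuous Real.tanh := by
  have h : Real.tanh = fun y => Real.sinh y / Real.cosh y :=
    funext fun y => Real.tanh_eq_sinh_div_cosh y
  rw [h]
  exact Real.continuous_sinh.div Real.continuous_cosh fun x => (Real.cosh_pos x).ne'

lemma one_sub_tanh_le (x : ℝ) : 1 - Real.tanh x ≤ 2 * Real.exp (-(2*x)) := by
  have hc := Real.cosh_pos x
  have h1 : 1 - Real.tanh x = Real.exp (-x) / Real.cosh x := by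
    rw [Real.tanh_eq_sinh_div_cosh]
    field_simp
    exact Real.cosh_sub_sinh x
  have h2 : Real.exp x / 2 ≤ Real.cosh x := by
    rw [Real.cosh_eq]; have := (Real.exp_pos (-x)).le; linarith
  rw [h1]
  have hex := Real.exp_pos x
  have h3 : Real.exp (-x) / Real.cosh x ≤ Real.exp (-x) / (Real.exp x / 2) :=
    div_le_div_of_nonneg_left (Real.exp_pos (-x)).le (by linarith) h2
  calc Real.exp (-x) / Real.cosh x ≤ Real.exp (-x) / (Real.exp x / 2) := h3
    _ = 2 * Real.exp (-(2*x)) := by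
        rw [show -(2*x) = -x + -x by ring, Real.exp_add]
        field_simp [Real.exp_neg]
        rw [← Real.exp_add]; simp

lemma arctanh_zero : arctanh 0 = 0 := by simp [arctanh]

lemma arctanh_neg (y : ℝ) : arctanh (-y) = - arctanh y := by
  unfold arctanh
  rw [show (1 + -y) / (1 - -y) = ((1+y)/(1-y))⁻¹ by rw [inv_div]; ring_nf, Real.log_inv]
  ring

lemma arctanh_le_arctanh {y z : ℝ} (h0 : -1 < y) (hyz : y ≤ z) (hz : z < 1) :
    arctanh y ≤ arctanh z := by
  unfold arctanh
  have h1 : (0:ℝ) < 1 - z := by linarith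
  have h2 : (0:ℝ) < 1 + y := by linarith
  have hp : 0 < (1+y)/(1-y) := div_pos h2 (by linarith)
  have hle : (1+y)/(1-y) ≤ (1+z)/(1-z) := by
    rw [div_le_div_iff₀ (by linarith) h1]; nlinarith
  have := Real.log_le_log hp hle
  linarith

lemma hasDerivAt_arctanh {y : ℝ} (hy : |y| < 1) : HasDerivAt arctanh (1 / (1 - y^2)) y := by
  obtain ⟨hy1, hy2⟩ := abs_lt.mp hy
  have h1 : 0 < 1 + y := by linarith
  have h2 : 0 < 1 - y := by linarith
  have d1 : HasDerivAt (fun z : ℝ => Real.log (1+z)) (1/(1+y)) y := by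
    have h : HasDerivAt (fun z : ℝ => 1+z) 1 y := (hasDerivAt_id y).const_add 1
    simpa using h.log h1.ne'
  have d2 : HasDerivAt (fun z : ℝ => Real.log (1-z)) (-1/(1-y)) y := by
    have h : HasDerivAt (fun z : ℝ => 1-z) (-1) y := (hasDerivAt_id y).const_sub 1
    simpa using h.log h2.ne'
  have hlog : HasDerivAt (fun z : ℝ => (1/2 : ℝ) * (Real.log (1+z) - Real.log (1-z)))
      (1/(1-y^2)) y := by
    have := (d1.sub d2).const_mul (1/2 : ℝ)
    refine this.congr_deriv ?_
    have h3 : (1:ℝ) - y^2 ≠ 0 := by nlinarith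
    field_simp
    ring
  apply hlog.congr_of_eventuallyEq
  filter_upwards [Ioo_mem_nhds hy1 hy2] with z hz
  obtain ⟨hz1, hz2⟩ := hz
  unfold arctanh
  rw [Real.log_div (ne_of_gt (by linarith : (0:ℝ) < 1+z)) (ne_of_gt (by linarith : (0:ℝ) < 1-z))]


lemma hasDerivAt_g (d : ℕ) {θ : ℝ} (hθ0 : 0 < θ) (hθ1 : θ < 1) (x : ℝ) :
    HasDerivAt (fun x => x - (d:ℝ) * arctanh (θ * Real.tanh x))
      (1 - (d:ℝ) * θ * (1 - Real.tanh x ^ 2) / (1 - θ^2 * Real.tanh x ^ 2)) x := by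
  have ht := abs_tanh_lt_one x
  have htt := abs_lt.mp ht
  have hyt : |θ * Real.tanh x| < 1 := by
    rw [abs_mul, abs_of_pos hθ0]
    nlinarith [abs_nonneg (Real.tanh x)]
  have inner : HasDerivAt (fun x => θ * Real.tanh x) (θ * (1 - Real.tanh x ^2)) x :=
    (hasDerivAt_tanh x).const_mul θ
  have comp := (hasDerivAt_arctanh hyt).comp x inner
  have hmul := comp.const_mul (d:ℝ)
  have final := (hasDerivAt_id x).sub hmul
  have h1 : θ^2 < 1 := by nlinarith
  have h2 : Real.tanh x^2 < 1 := by nlinarith [sq_abs (Real.tanh x), abs_nonneg (Real.tanh x)]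
  have hden : (0:ℝ) < 1 - θ^2 * Real.tanh x^2 := by nlinarith [sq_nonneg (Real.tanh x), sq_nonneg θ]
  refine final.congr_deriv ?_
  rw [mul_pow]
  field_simp


lemma phi_anti {d : ℕ} {θ : ℝ} (hd : 0 < (d:ℝ)) (hθ0 : 0 < θ) (hθ1 : θ < 1) :
    StrictAntiOn (fun x => (d:ℝ) * θ * (1 - Real.tanh x ^ 2) / (1 - θ^2 * Real.tanh x ^ 2))
      (Set.Ici 0) := by
  intro x hx y hy hxy
  simp only [Set.mem_Ici] at hx hy
  have htx : 0 ≤ Real.tanh x := tanh_nonneg hx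
  have hty : Real.tanh x < Real.tanh y := tanh_strictMono hxy
  have hu : Real.tanh x ^ 2 < Real.tanh y ^ 2 := by nlinarith
  have hv1 : Real.tanh y ^ 2 < 1 := by
    nlinarith [abs_tanh_lt_one y, sq_abs (Real.tanh y), abs_nonneg (Real.tanh y)]
  have hθ2 : θ^2 < 1 := by nlinarith
  have hd1 : (0:ℝ) < 1 - θ^2 * Real.tanh x ^ 2 := by nlinarith [sq_nonneg (Real.tanh x)]
  have hd2 : (0:ℝ) < 1 - θ^2 * Real.tanh y ^ 2 := by nlinarith [sq_nonneg (Real.tanh y)]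
  simp only
  rw [div_lt_div_iff₀ hd2 hd1]
  have hdθ : 0 < (d:ℝ) * θ := mul_pos hd hθ0
  nlinarith [mul_pos hdθ (mul_pos (show (0:ℝ) < Real.tanh y^2 - Real.tanh x^2 by linarith)
    (show (0:ℝ) < 1 - θ^2 by linarith))]

end CFT

set_option maxHeartbeats 2000000 in
open CFT Set in
/-- if `d·θ > 1` (low temperature), there is a critical field `h_c > 0`
such that `ψ_h(x) = h + d·arctanh(θ·tanh x)` has exactly one, two, or three fixed
points according to whether `|h| > h_c`, `|h| = h_c`, or `|h| < h_c`. -/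
theorem critical_field_trichotomy
    (d : ℕ) (hd : 2 ≤ d) (θ : ℝ) (hθ : θ ∈ Set.Ioo (0 : ℝ) 1)
    (hdθ : 1 < (d : ℝ) * θ) :
    ∃ hc : ℝ, 0 < hc ∧ ∀ h : ℝ,
      (hc < |h| →
        {x : ℝ | h + d * arctanh (θ * Real.tanh x) = x}.ncard = 1) ∧
      (|h| = hc →
        {x : ℝ | h + d * arctanh (θ * Real.tanh x) = x}.ncard = 2) ∧
      (|h| < hc →
        {x : ℝ | h + d * arctanh (θ * Real.tanh x) = x}.ncard = 3) := by
  obtain ⟨hθ0, hθ1⟩ := hθ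
  have hD : (2:ℝ) ≤ (d:ℝ) := by exact_mod_cast hd
  have hd0 : (0:ℝ) < (d:ℝ) := by linarith
  obtain ⟨g, hgdef⟩ : ∃ g' : ℝ → ℝ, g' = fun x => x - (d:ℝ) * arctanh (θ * Real.tanh x) :=
    ⟨_, rfl⟩
  obtain ⟨φ, hφdef⟩ : ∃ φ' : ℝ → ℝ,
      φ' = fun x => (d:ℝ) * θ * (1 - Real.tanh x ^ 2) / (1 - θ^2 * Real.tanh x ^ 2) := ⟨_, rfl⟩
  have hG : ∀ x, HasDerivAt g (1 - φ x) x := by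
    intro x
    rw [hgdef, hφdef]
    exact hasDerivAt_g d hθ0 hθ1 x
  have hgc : Continuous g := by
    rw [continuous_iff_continuousAt]
    exact fun x => (hG x).differentiableAt.continuousAt
  have hθ2 : θ^2 < 1 := by nlinarith
  have hdenpos : ∀ x : ℝ, (0:ℝ) < 1 - θ^2 * Real.tanh x ^ 2 := by
    intro x
    nlinarith [abs_tanh_lt_one x, sq_abs (Real.tanh x), abs_nonneg (Real.tanh x),
      sq_nonneg (Real.tanh x)]
  have hφc : Continuous φ := by
    rw [hφdef]
    apply Continuous.div
    · exact (continuous_const.mul (continuous_const.sub (continuous_tanh.pow 2)))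
    · exact continuous_const.sub (continuous_const.mul (continuous_tanh.pow 2))
    · exact fun x => (hdenpos x).ne'
  have hφanti : StrictAntiOn φ (Ici 0) := by
    rw [hφdef]; exact phi_anti hd0 hθ0 hθ1
  have hφeven : ∀ x, φ (-x) = φ x := by
    intro x; rw [hφdef]; simp only [Real.tanh_neg, neg_sq]
  have hφ0 : φ 0 = (d:ℝ) * θ := by
    rw [hφdef]; simp [Real.tanh_zero]
  -- a point X where φ X < 1
  obtain ⟨ε, hεdef⟩ : ∃ e : ℝ, e = (1 - θ^2) / ((d:ℝ) * θ) := ⟨_, rfl⟩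
  have hε : 0 < ε := by rw [hεdef]; exact div_pos (by linarith) (by positivity)
  obtain ⟨X, hXdef⟩ : ∃ x : ℝ, x = max 1 (-(1/2) * Real.log (ε/8)) := ⟨_, rfl⟩
  have hX1 : (1:ℝ) ≤ X := by rw [hXdef]; exact le_max_left _ _
  have hXb : 4 * Real.exp (-(2*X)) < ε := by
    have h8 : 0 < ε/8 := by positivity
    have hle : Real.exp (-(2*X)) ≤ ε/8 := by
      rw [← Real.exp_log h8]
      apply Real.exp_le_exp.mpr
      have h9 : -(1/2) * Real.log (ε/8) ≤ X := by rw [hXdef]; exact le_max_right _ _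
      linarith
    linarith
  have hφX : φ X < 1 := by
    have ht0 : 0 ≤ Real.tanh X := tanh_nonneg (by linarith)
    have ht1 : Real.tanh X < 1 := tanh_lt_one X
    have hub : 1 - Real.tanh X ^ 2 < ε := by
      have h1 := one_sub_tanh_le X
      nlinarith
    have hnum : (d:ℝ) * θ * (1 - Real.tanh X ^ 2) < 1 - θ^2 := by
      have hdθ0 : 0 < (d:ℝ) * θ := by positivity
      have h2 : (d:ℝ) * θ * (1 - Real.tanh X ^ 2) < (d:ℝ) * θ * ε :=
        mul_lt_mul_of_pos_left hub hdθ0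
      have heq : (d:ℝ) * θ * ε = 1 - θ^2 := by rw [hεdef]; field_simp
      linarith
    rw [hφdef]
    show (d:ℝ) * θ * (1 - Real.tanh X ^ 2) / (1 - θ^2 * Real.tanh X ^ 2) < 1
    rw [div_lt_one (hdenpos X)]
    nlinarith [sq_nonneg (Real.tanh X)]
  -- the critical point a
  have hφ0gt : 1 < φ 0 := by rw [hφ0]; exact hdθ
  obtain ⟨a, haI, ha⟩ : ∃ a ∈ Icc (0:ℝ) X, φ a = 1 := by
    have hsub := intermediate_value_Icc' (by linarith : (0:ℝ) ≤ X) hφc.continuousOn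
    have hmem : (1:ℝ) ∈ Icc (φ X) (φ 0) := ⟨hφX.le, hφ0gt.le⟩
    obtain ⟨a, haI, ha⟩ := hsub hmem
    exact ⟨a, haI, ha⟩
  have ha0 : 0 < a := by
    rcases haI.1.eq_or_lt with h | h
    · exfalso; rw [← h] at ha; rw [← ha] at hφ0gt; exact lt_irrefl _ hφ0gt
    · exact h
  have key1 : ∀ x : ℝ, |x| < a → 1 < φ x := by
    intro x hx
    have h1 : φ |x| = φ x := by
      rcases abs_cases x with ⟨h, _⟩ | ⟨h, _⟩
      · rw [h]
      · rw [h, hφeven]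
    have := hφanti (mem_Ici.mpr (abs_nonneg x)) (mem_Ici.mpr (le_of_lt ha0)) hx
    rw [ha] at this; rw [← h1]; exact this
  have key2 : ∀ x : ℝ, a < |x| → φ x < 1 := by
    intro x hx
    have h1 : φ |x| = φ x := by
      rcases abs_cases x with ⟨h, _⟩ | ⟨h, _⟩
      · rw [h]
      · rw [h, hφeven]
    have := hφanti (mem_Ici.mpr (le_of_lt ha0)) (mem_Ici.mpr (abs_nonneg x)) hx
    rw [ha] at this; rw [← h1]; exact this
  -- monotonicity of g
  have hanti : StrictAntiOn g (Icc (-a) a) := by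
    apply strictAntiOn_of_deriv_neg (convex_Icc _ _) hgc.continuousOn
    intro x hx
    rw [interior_Icc] at hx
    rw [(hG x).deriv]
    have hx' : -a < x ∧ x < a := ⟨hx.1, hx.2⟩
    have := key1 x (abs_lt.mpr hx')
    linarith
  have hmono1 : StrictMonoOn g (Ici a) := by
    apply strictMonoOn_of_deriv_pos (convex_Ici _) hgc.continuousOn
    intro x hx
    rw [interior_Ici] at hx
    rw [(hG x).deriv]
    have hx' : a < x := hx
    have := key2 x (lt_of_lt_of_le hx' (le_abs_self x))
    linarith
  have hmono2 : StrictMonoOn g (Iic (-a)) := by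
    apply strictMonoOn_of_deriv_pos (convex_Iic _) hgc.continuousOn
    intro x hx
    rw [interior_Iic] at hx
    have hx' : x < -a := hx
    rw [(hG x).deriv]
    have h2 : a < |x| := lt_of_lt_of_le (by linarith : a < -x) (neg_le_abs x)
    have := key2 x h2
    linarith
  have hodd : ∀ x, g (-x) = - g x := by
    intro x
    rw [hgdef]
    simp only [Real.tanh_neg]
    rw [show θ * -Real.tanh x = -(θ * Real.tanh x) by ring, arctanh_neg]
    ring
  have hg0 : g 0 = 0 := by
    rw [hgdef]; simp [Real.tanh_zero, arctanh_zero]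
  obtain ⟨hc, hhcdef⟩ : ∃ c : ℝ, c = g (-a) := ⟨_, rfl⟩
  have hga' : g (-a) = hc := hhcdef.symm
  have hga : g a = -hc := by
    have h1 := hodd a
    rw [hga'] at h1
    linarith
  have hc_pos : 0 < hc := by
    have h1 := hanti (show -a ∈ Icc (-a) a by constructor <;> linarith)
      (show (0:ℝ) ∈ Icc (-a) a by constructor <;> linarith) (by linarith)
    rw [hg0, hga'] at h1
    exact h1
  -- uniform bound on g x - x
  obtain ⟨M, hMdef⟩ : ∃ m : ℝ, m = (d:ℝ) * arctanh θ := ⟨_, rfl⟩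
  have harcnn : 0 ≤ arctanh θ := by
    have := arctanh_le_arctanh (by norm_num : (-1:ℝ) < 0) hθ0.le hθ1
    rwa [arctanh_zero] at this
  have hM0 : 0 ≤ M := by rw [hMdef]; positivity
  have hbound : ∀ x, |g x - x| ≤ M := by
    intro x
    have h1 : g x - x = -((d:ℝ) * arctanh (θ * Real.tanh x)) := by rw [hgdef]; ring
    rw [h1, abs_neg, abs_mul, Nat.abs_cast, hMdef]
    apply mul_le_mul_of_nonneg_left _ hd0.le
    have htx := abs_lt.mp (abs_tanh_lt_one x)
    have hm1 := mul_lt_mul_of_pos_left htx.1 hθ0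
    have hm2 := mul_lt_mul_of_pos_left htx.2 hθ0
    have hy1 : -1 < θ * Real.tanh x := by nlinarith [hm1]
    have hy2 : θ * Real.tanh x ≤ θ := by nlinarith [hm2]
    have hy3 : -θ ≤ θ * Real.tanh x := by nlinarith [hm1]
    have hub : arctanh (θ * Real.tanh x) ≤ arctanh θ := arctanh_le_arctanh hy1 hy2 hθ1
    have hlb : -arctanh θ ≤ arctanh (θ * Real.tanh x) := by
      have := arctanh_le_arctanh (by linarith : (-1:ℝ) < -θ) hy3
        (by nlinarith [hm2] : θ * Real.tanh x < 1)
      rwa [arctanh_neg] at this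
    exact abs_le.mpr ⟨hlb, hub⟩
  have hup : ∀ x, g x ≤ x + M := fun x => by
    have h := abs_le.mp (hbound x); linarith [h.2]
  have hlow : ∀ x, x - M ≤ g x := fun x => by
    have h := abs_le.mp (hbound x); linarith [h.1]
  -- existence of solutions in each branch
  have exL : ∀ h : ℝ, h ≤ hc → ∃ x ≤ -a, g x = h := by
    intro h hh
    obtain ⟨b, hbdef⟩ : ∃ b : ℝ, b = min (h - M) (-a) - 1 := ⟨_, rfl⟩
    have hb1 : b ≤ -a := by
      have := min_le_right (h - M) (-a); rw [hbdef]; linarith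
    have hgb : g b ≤ h - 1 := by
      have h2 := hup b
      have h3 : b ≤ h - M - 1 := by
        have := min_le_left (h - M) (-a); rw [hbdef]; linarith
      linarith
    obtain ⟨x, hx, hgx⟩ := intermediate_value_Icc hb1 hgc.continuousOn
      (show h ∈ Icc (g b) (g (-a)) from ⟨by linarith, by rw [hga']; exact hh⟩)
    exact ⟨x, hx.2, hgx⟩
  have exR : ∀ h : ℝ, -hc ≤ h → ∃ x, a ≤ x ∧ g x = h := by
    intro h hh
    obtain ⟨c, hcdef⟩ : ∃ c : ℝ, c = max (h + M) a + 1 := ⟨_, rfl⟩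
    have hc1 : a ≤ c := by
      have := le_max_right (h + M) a; rw [hcdef]; linarith
    have hgc2 : h + 1 ≤ g c := by
      have h2 := hlow c
      have h3 : h + M + 1 ≤ c := by
        have := le_max_left (h + M) a; rw [hcdef]; linarith
      linarith
    obtain ⟨x, hx, hgx⟩ := intermediate_value_Icc hc1 hgc.continuousOn
      (show h ∈ Icc (g a) (g c) from ⟨by rw [hga]; linarith, by linarith⟩)
    exact ⟨x, hx.1, hgx⟩
  have exM : ∀ h : ℝ, -hc ≤ h → h ≤ hc → ∃ x ∈ Icc (-a) a, g x = h := by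
    intro h h1 h2
    have hsub := intermediate_value_Icc' (show -a ≤ a by linarith) hgc.continuousOn
    exact hsub (show h ∈ Icc (g a) (g (-a)) from ⟨by rw [hga]; linarith, by rw [hga']; exact h2⟩)
  -- bounds on g on each branch
  have bnd1 : ∀ x, x ≤ -a → g x ≤ hc := by
    intro x hx
    rw [← hga']
    exact hmono2.monotoneOn (mem_Iic.mpr hx) (mem_Iic.mpr le_rfl) hx
  have bnd2 : ∀ x, x ∈ Icc (-a) a → -hc ≤ g x ∧ g x ≤ hc := by
    intro x hx
    constructor
    · rw [← hga]
      exact hanti.antitoneOn hx (right_mem_Icc.mpr (by linarith)) hx.2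
    · rw [← hga']
      exact hanti.antitoneOn (left_mem_Icc.mpr (by linarith)) hx hx.1
  have bnd3 : ∀ x, a ≤ x → -hc ≤ g x := by
    intro x hx
    rw [← hga]
    exact hmono1.monotoneOn (mem_Ici.mpr le_rfl) (mem_Ici.mpr hx) hx
  -- rewriting the solution set
  have hset : ∀ h : ℝ, {x : ℝ | h + (d:ℝ) * arctanh (θ * Real.tanh x) = x} = {x | g x = h} := by
    intro h
    ext x
    simp only [mem_setOf_eq, hgdef]
    constructor <;> intro hh <;> linarith
  refine ⟨hc, hc_pos, fun h => ⟨?_, ?_, ?_⟩⟩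
  · -- one solution
    intro hh
    rw [hset]
    rcases lt_abs.mp hh with h1 | h1
    · obtain ⟨x3, hx3, hgx3⟩ := exR h (by linarith)
      have hone : {x : ℝ | g x = h} = {x3} := by
        ext x
        simp only [mem_setOf_eq, mem_singleton_iff]
        constructor
        · intro hgx
          have hxa : a ≤ x := by
            by_contra hcon
            push_neg at hcon
            rcases le_or_gt x (-a) with hx | hx
            · have := bnd1 x hx; linarith
            · have := (bnd2 x ⟨hx.le, hcon.le⟩).2; linarith
          exact hmono1.injOn (mem_Ici.mpr hxa) (mem_Ici.mpr hx3) (by rw [hgx, hgx3])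
        · intro hx; rw [hx, hgx3]
      rw [hone, ncard_singleton]
    · have h1' : h < -hc := by linarith
      obtain ⟨x1, hx1, hgx1⟩ := exL h (by linarith)
      have hone : {x : ℝ | g x = h} = {x1} := by
        ext x
        simp only [mem_setOf_eq, mem_singleton_iff]
        constructor
        · intro hgx
          have hxa : x ≤ -a := by
            by_contra hcon
            push_neg at hcon
            rcases le_or_gt x a with hx | hx
            · have := (bnd2 x ⟨hcon.le, hx⟩).1; linarith
            · have := bnd3 x hx.le; linarith
          exact hmono2.injOn (mem_Iic.mpr hxa) (mem_Iic.mpr hx1) (by rw [hgx, hgx1])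
        · intro hx; rw [hx, hgx1]
      rw [hone, ncard_singleton]
  · -- two solutions
    intro hh
    rw [hset]
    rcases (abs_eq hc_pos.le).mp hh with h1 | h1
    · rw [h1]
      obtain ⟨x3, hx3, hgx3⟩ := exR hc (by linarith)
      have hx3a : -a < x3 := by linarith
      have htwo : {x : ℝ | g x = hc} = {-a, x3} := by
        ext x
        simp only [mem_setOf_eq, mem_insert_iff, mem_singleton_iff]
        constructor
        · intro hgx
          rcases le_or_gt x (-a) with hx | hx
          · left
            exact hmono2.injOn (mem_Iic.mpr hx) (mem_Iic.mpr le_rfl) (by rw [hgx, hga'])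
          · rcases le_or_gt x a with hx' | hx'
            · left
              exact hanti.injOn ⟨hx.le, hx'⟩ (left_mem_Icc.mpr (by linarith))
                (by rw [hgx, hga'])
            · right
              exact hmono1.injOn (mem_Ici.mpr hx'.le) (mem_Ici.mpr hx3) (by rw [hgx, hgx3])
        · rintro (hx | hx)
          · rw [hx, hga']
          · rw [hx, hgx3]
      rw [htwo, ncard_pair (by intro hcon; rw [← hcon] at hx3a; linarith)]
    · rw [h1]
      obtain ⟨x1, hx1, hgx1⟩ := exL (-hc) (by linarith)
      have hx1a : x1 ≠ a := by intro hcon; rw [hcon] at hx1; linarith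
      have htwo : {x : ℝ | g x = -hc} = {x1, a} := by
        ext x
        simp only [mem_setOf_eq, mem_insert_iff, mem_singleton_iff]
        constructor
        · intro hgx
          rcases le_or_gt x (-a) with hx | hx
          · left
            exact hmono2.injOn (mem_Iic.mpr hx) (mem_Iic.mpr hx1) (by rw [hgx, hgx1])
          · rcases le_or_gt x a with hx' | hx'
            · right
              exact hanti.injOn ⟨hx.le, hx'⟩ (right_mem_Icc.mpr (by linarith))
                (by rw [hgx, hga])
            · right
              exact hmono1.injOn (mem_Ici.mpr hx'.le) (mem_Ici.mpr le_rfl)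
                (by rw [hgx, hga])
        · rintro (hx | hx)
          · rw [hx, hgx1]
          · rw [hx, hga]
      rw [htwo, ncard_pair hx1a]
  · -- three solutions
    intro hh
    rw [hset]
    obtain ⟨hh1, hh2⟩ := abs_lt.mp hh
    obtain ⟨x1, hx1, hgx1⟩ := exL h (by linarith)
    obtain ⟨x2, hx2I, hgx2⟩ := exM h (by linarith) (by linarith)
    obtain ⟨x3, hx3, hgx3⟩ := exR h (by linarith)
    have hx1s : x1 < -a := by
      rcases hx1.eq_or_lt with hcon | hcon
      · exfalso; rw [hcon, hga'] at hgx1; linarith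
      · exact hcon
    have hx2s1 : -a < x2 := by
      rcases hx2I.1.eq_or_lt with hcon | hcon
      · exfalso; rw [← hcon, hga'] at hgx2; linarith
      · exact hcon
    have hx2s2 : x2 < a := by
      rcases hx2I.2.eq_or_lt with hcon | hcon
      · exfalso; rw [hcon, hga] at hgx2; linarith
      · exact hcon
    have hx3s : a < x3 := by
      rcases hx3.eq_or_lt with hcon | hcon
      · exfalso; rw [← hcon, hga] at hgx3; linarith
      · exact hcon
    have hthree : {x : ℝ | g x = h} = {x1, x2, x3} := by
      ext x
      simp only [mem_setOf_eq, mem_insert_iff, mem_singleton_iff]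
      constructor
      · intro hgx
        rcases le_or_gt x (-a) with hx | hx
        · left
          exact hmono2.injOn (mem_Iic.mpr hx) (mem_Iic.mpr hx1) (by rw [hgx, hgx1])
        · rcases le_or_gt x a with hx' | hx'
          · right; left
            exact hanti.injOn ⟨hx.le, hx'⟩ hx2I (by rw [hgx, hgx2])
          · right; right
            exact hmono1.injOn (mem_Ici.mpr hx'.le) (mem_Ici.mpr hx3) (by rw [hgx, hgx3])
      · rintro (hx | hx | hx) <;> rw [hx]
        · exact hgx1
        · exact hgx2
        · exact hgx3
    rw [hthree, Set.ncard_eq_three]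
    exact ⟨x1, x2, x3, by intro hcon; rw [hcon] at hx1s; linarith,
      by intro hcon; rw [hcon] at hx1s; linarith,
      by intro hcon; rw [hcon] at hx2s2; linarith, rfl⟩
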